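/- Let T be a string whose characters are pairwise distinct (a permutation string), and suppose T[i..j] is a Cartesian-tree rev-palindrome. Then the leftmost position m of the smallest character of T[i..j] equals the center (i+j)/2 of T[i..j]. -/

import Mathlib

/-- `sub S i j` is the substring `S[i..j]` (1-indexed, inclusive). -/
def sub {α : Type*} (S : List α) (i j : ℕ) : List α :=
  (S.drop (i - 1)).take (j - i + 1)

/-- unlabeled ordered binary trees -/
inductive BT : Type
  | leaf : BT
  | node : BT → BT → BT
deriving DecidableEq

/-- Cartesian tree, computed with a fuel argument (fuel `≥` length suffices). -/
def ctAux {α : Type*} [LinearOrder α] : ℕ → List α → BT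
  | 0, _ => .leaf
  | _, [] => .leaf
  | n + 1, x :: xs =>
    let l := x :: xs
    let i := l.idxOf (xs.foldl min x)   -- leftmost position of the minimum
    .node (ctAux n (l.take i)) (ctAux n (l.drop (i + 1)))

/-- the Cartesian tree `CT(l)` of a string `l`. -/
def ctree {α : Type*} [LinearOrder α] (l : List α) : BT :=
  ctAux l.length l

def bsize : BT → ℕ
  | .leaf => 0
  | .node a b => bsize a + bsize b + 1

def lsize : BT → ℕ
  | .leaf => 0
  | .node a _ => bsize a

lemma foldl_min_mem {α : Type*} [LinearOrder α] :
    ∀ (xs : List α) (x : α), xs.foldl min x ∈ x :: xs := by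
  intro xs
  induction xs with
  | nil => intro x; simp
  | cons y ys ih =>
    intro x
    have h := ih (min x y)
    simp only [List.foldl_cons]
    rcases List.mem_cons.1 h with h | h
    · rcases min_choice x y with h' | h' <;> rw [h'] at h <;> simp [h, h']
    · simp [h]

lemma foldl_min_le {α : Type*} [LinearOrder α] :
    ∀ (xs : List α) (x : α) (a : α), a ∈ x :: xs → xs.foldl min x ≤ a := by
  intro xs
  induction xs with
  | nil => intro x a ha; simp at ha; simp [ha]
  | cons y ys ih =>
    intro x a ha
    simp only [List.foldl_cons]
    rcases List.mem_cons.1 ha with h | h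
    · rw [h]
      exact le_trans (ih (min x y) _ (List.mem_cons_self)) (min_le_left _ _)
    · rcases List.mem_cons.1 h with h' | h'
      · rw [h']
        exact le_trans (ih (min x y) _ (List.mem_cons_self)) (min_le_right _ _)
      · exact ih (min x y) a (List.mem_cons_of_mem _ h')

lemma bsize_ctAux {α : Type*} [LinearOrder α] :
    ∀ (n : ℕ) (l : List α), l.length ≤ n → bsize (ctAux n l) = l.length := by
  intro n
  induction n with
  | zero => intro l hl; interval_cases h : l.length; simp [ctAux, bsize]
  | succ n ih =>
    intro l hl
    match l with
    | [] => simp [ctAux, bsize]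
    | x :: xs =>
      simp only [ctAux, bsize]
      set v := xs.foldl min x with hv
      have hmem : v ∈ x :: xs := foldl_min_mem xs x
      have hidx : (x :: xs).idxOf v < (x :: xs).length :=
        List.idxOf_lt_length_iff.2 hmem
      set k := (x :: xs).idxOf v with hk
      have hk1 : k < xs.length + 1 := by simpa using hidx
      have h1 : ((x :: xs).take k).length = k := by
        simp only [List.length_take, List.length_cons]; omega
      have h2 : ((x :: xs).drop (k + 1)).length = (x :: xs).length - (k + 1) := by
        simp [List.length_drop]
      have hl1 : xs.length ≤ n := by simp at hl; omega
      rw [ih _ (by rw [h1]; omega),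
          ih _ (by rw [h2]; simp only [List.length_cons]; omega), h1, h2]
      simp only [List.length_cons]
      omega

lemma lsize_ctree {α : Type*} [LinearOrder α] (x : α) (xs : List α) :
    lsize (ctree (x :: xs)) = (x :: xs).idxOf (xs.foldl min x) := by
  have hmem : xs.foldl min x ∈ x :: xs := foldl_min_mem xs x
  have hidx : (x :: xs).idxOf (xs.foldl min x) < (x :: xs).length :=
    List.idxOf_lt_length_iff.2 hmem
  show lsize (ctAux (xs.length + 1) (x :: xs)) = _
  simp only [ctAux, lsize]
  rw [bsize_ctAux]
  · simp [List.length_take]; simp at hidx; omega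
  · simp [List.length_take]; simp at hidx; omega

/-- the min index of a nodup list with minimum at `m` -/
lemma indexOf_min {α : Type*} [LinearOrder α] (l : List α) (hnd : l.Nodup)
    (m : ℕ) (hm : m < l.length)
    (hmin : ∀ k (hk : k < l.length), l.get ⟨m, hm⟩ ≤ l.get ⟨k, hk⟩)
    (x : α) (xs : List α) (hl : l = x :: xs) :
    (x :: xs).idxOf (xs.foldl min x) = m := by
  subst hl
  set v := xs.foldl min x with hv
  have hmem : v ∈ x :: xs := foldl_min_mem xs x
  have hidx : (x :: xs).idxOf v < (x :: xs).length :=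
    List.idxOf_lt_length_iff.2 hmem
  have hgetv : (x :: xs).get ⟨(x :: xs).idxOf v, hidx⟩ = v := List.idxOf_get _
  have h1 : v ≤ (x :: xs).get ⟨m, hm⟩ := foldl_min_le xs x _ (List.get_mem _ _)
  have h2 : (x :: xs).get ⟨m, hm⟩ ≤ v := by
    rw [← hgetv]; exact hmin _ _
  have : (x :: xs).get ⟨(x :: xs).idxOf v, hidx⟩ = (x :: xs).get ⟨m, hm⟩ := by
    rw [hgetv]; exact le_antisymm h1 h2
  have := (hnd.get_inj_iff).1 this
  exact Fin.mk.inj_iff.1 this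

theorem stmt15 {α : Type*} [LinearOrder α] (T : List α) (i j : ℕ)
    (h1 : 1 ≤ i) (hij : i ≤ j) (hj : j ≤ T.length)
    (hnd : (sub T i j).Nodup)
    (hpal : ctree (sub T i j) = ctree ((sub T i j).reverse))
    (m : ℕ) (hm : m < (sub T i j).length)
    (hmin : ∀ k (hk : k < (sub T i j).length),
      (sub T i j).get ⟨m, hm⟩ ≤ (sub T i j).get ⟨k, hk⟩) :
    2 * (i + m) = i + j := by
  have hlen0 : (sub T i j).length = j - i + 1 := by
    simp only [sub, List.length_take, List.length_drop]
    omega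
  set l := sub T i j with hlsub
  have hlen : l.length = j - i + 1 := hlen0
  have hpos : 0 < l.length := lt_of_le_of_lt (Nat.zero_le m) hm
  obtain ⟨x, xs, hx⟩ : ∃ x xs, l = x :: xs := by
    cases h : l with
    | nil => rw [h] at hpos; simp at hpos
    | cons a b => exact ⟨a, b, rfl⟩
  obtain ⟨y, ys, hy⟩ : ∃ y ys, l.reverse = y :: ys := by
    cases h : l.reverse with
    | nil =>
      have := congrArg List.length h
      rw [List.length_reverse] at this
      simp only [List.length_nil] at this
      omega
    | cons a b => exact ⟨a, b, rfl⟩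
  -- left subtree size of ctree l is m
  have hL : lsize (ctree l) = m := by
    rw [hx, lsize_ctree, indexOf_min l hnd m hm hmin x xs hx]
  -- min position of l.reverse
  have hm' : l.length - 1 - m < l.reverse.length := by
    rw [List.length_reverse]; omega
  have hget' : l.reverse.get ⟨l.length - 1 - m, hm'⟩ = l.get ⟨m, hm⟩ :=
    by rw [List.get_reverse' _ _ (by simp; omega)]; congr 1; exact Fin.ext (by simp; omega)
  have hmin' : ∀ k (hk : k < l.reverse.length),
      l.reverse.get ⟨l.length - 1 - m, hm'⟩ ≤ l.reverse.get ⟨k, hk⟩ := by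
    intro k hk
    rw [hget', List.get_reverse' l ⟨k, hk⟩ (by simp at hk ⊢; omega)]
    exact hmin _ _
  have hR : lsize (ctree l.reverse) = l.length - 1 - m := by
    rw [hy, lsize_ctree,
      indexOf_min l.reverse (List.nodup_reverse.2 hnd) _ hm' hmin' y ys hy]
  rw [← hpal, hL] at hR
  omega
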